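/- For every positive integer n, let f(n) be the repunit-like number with digits 1 separated by a 0, defined by f(0) = 1 and f(n) = 100·f(n-1) + 1. Then (11·f(n), 60·f(n), 61·f(n)) is a Pythagorean triple, 11·f(n) is a decimal palindrome, and neither 60·f(n) nor 61·f(n) is a decimal palindrome. -/

import Mathlib

def IsDecimalPalindrome (n : ℕ) : Prop := (Nat.digits 10 n).reverse = Nat.digits 10 n

private lemma Spos (n : ℕ) : 0 < ∑ k ∈ Finset.range (n + 1), 100 ^ k :=
  Finset.sum_pos (fun i _ => pow_pos (by norm_num) i) ⟨0, Finset.mem_range.mpr (Nat.succ_pos n)⟩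

private lemma Ssucc (n : ℕ) :
    ∑ k ∈ Finset.range (n + 2), 100 ^ k = 100 * (∑ k ∈ Finset.range (n + 1), 100 ^ k) + 1 :=
  geom_sum_succ

private lemma dstep (x a b : ℕ) (hx : 0 < x) (ha : a < 10) (hb : b < 10) :
    Nat.digits 10 (100 * x + (10 * b + a)) = a :: b :: Nat.digits 10 x := by
  rw [Nat.digits_def' (by norm_num : (1:ℕ) < 10) (by positivity)]
  have h1 : (100 * x + (10 * b + a)) % 10 = a := by omega
  have h2 : (100 * x + (10 * b + a)) / 10 = 10 * x + b := by omega
  rw [h1, h2, Nat.digits_def' (by norm_num : (1:ℕ) < 10) (by positivity)]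
  have h3 : (10 * x + b) % 10 = b := by omega
  have h4 : (10 * x + b) / 10 = x := by omega
  rw [h3, h4]

private lemma dA (n : ℕ) :
    Nat.digits 10 (11 * ∑ k ∈ Finset.range (n + 1), 100 ^ k) = List.replicate (2 * n + 2) 1 := by
  induction n with
  | zero => norm_num; rfl
  | succ m ih =>
    rw [Ssucc,
      show 11 * (100 * (∑ k ∈ Finset.range (m + 1), 100 ^ k) + 1)
        = 100 * (11 * ∑ k ∈ Finset.range (m + 1), 100 ^ k) + (10 * 1 + 1) from by ring,
      dstep _ _ _ (Nat.mul_pos (by norm_num) (Spos m)) (by norm_num) (by norm_num), ih]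
    rfl

private lemma dB (n : ℕ) : ∃ t, Nat.digits 10 (60 * ∑ k ∈ Finset.range (n + 1), 100 ^ k)
    = 0 :: (t ++ [6]) := by
  induction n with
  | zero => exact ⟨[], by norm_num⟩
  | succ m ih =>
    obtain ⟨t, ht⟩ := ih
    refine ⟨6 :: 0 :: t, ?_⟩
    rw [Ssucc,
      show 60 * (100 * (∑ k ∈ Finset.range (m + 1), 100 ^ k) + 1)
        = 100 * (60 * ∑ k ∈ Finset.range (m + 1), 100 ^ k) + (10 * 6 + 0) from by ring,
      dstep _ _ _ (Nat.mul_pos (by norm_num) (Spos m)) (by norm_num) (by norm_num), ht]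
    rfl

private lemma dC (n : ℕ) : ∃ t, Nat.digits 10 (61 * ∑ k ∈ Finset.range (n + 1), 100 ^ k)
    = 1 :: (t ++ [6]) := by
  induction n with
  | zero => exact ⟨[], by norm_num⟩
  | succ m ih =>
    obtain ⟨t, ht⟩ := ih
    refine ⟨6 :: 1 :: t, ?_⟩
    rw [Ssucc,
      show 61 * (100 * (∑ k ∈ Finset.range (m + 1), 100 ^ k) + 1)
        = 100 * (61 * ∑ k ∈ Finset.range (m + 1), 100 ^ k) + (10 * 6 + 1) from by ring,
      dstep _ _ _ (Nat.mul_pos (by norm_num) (Spos m)) (by norm_num) (by norm_num), ht]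
    rfl

theorem scaled_11_60_61_one_palindrome (n : ℕ) (hn : 0 < n) :
    (11 * ∑ k ∈ Finset.range (n + 1), 100 ^ k) ^ 2
      + (60 * ∑ k ∈ Finset.range (n + 1), 100 ^ k) ^ 2
      = (61 * ∑ k ∈ Finset.range (n + 1), 100 ^ k) ^ 2 ∧
    IsDecimalPalindrome (11 * ∑ k ∈ Finset.range (n + 1), 100 ^ k) ∧
    ¬ IsDecimalPalindrome (60 * ∑ k ∈ Finset.range (n + 1), 100 ^ k) ∧
    ¬ IsDecimalPalindrome (61 * ∑ k ∈ Finset.range (n + 1), 100 ^ k) := by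
  refine ⟨by ring, ?_, ?_, ?_⟩
  · unfold IsDecimalPalindrome
    rw [dA n, List.reverse_replicate]
  · intro h
    obtain ⟨t, ht⟩ := dB n
    unfold IsDecimalPalindrome at h
    rw [ht] at h
    have := congrArg List.head? h
    simp at this
  · intro h
    obtain ⟨t, ht⟩ := dC n
    unfold IsDecimalPalindrome at h
    rw [ht] at h
    have := congrArg List.head? h
    simp at this
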